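/- For every real I with 0 < I < 1, the spiking period of the quadratic phase model (QIF*) with threshold 1 and reset −1 satisfies ∫_{−1}^{1} dy / ((1−I)·y² + I) = 2·arctan(√((1−I)/I)) / √((1−I)·I); equivalently its firing rate is r(I) = (1/2)·√((1−I)I) / arctan(√((1−I)/I)). Consequently, the firing rate is approximated by the QIF rate near onset: lim_{I→0⁺} r(I)·π/√I = 1. -/

import Mathlib

open Real Filter

lemma integral_part {I : ℝ} (hI0 : 0 < I) (hI1 : I < 1) :
    ∫ y in (-1 : ℝ)..1, 1 / ((1 - I) * y ^ 2 + I)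
      = 2 * Real.arctan (Real.sqrt ((1 - I) / I)) / Real.sqrt ((1 - I) * I) := by
  have ha0 : 0 < 1 - I := by linarith
  set c := Real.sqrt ((1 - I) / I) with hc
  set s := Real.sqrt ((1 - I) * I) with hs
  have hcdef : c = Real.sqrt (1 - I) / Real.sqrt I := Real.sqrt_div ha0.le I
  have hsdef : s = Real.sqrt (1 - I) * Real.sqrt I := Real.sqrt_mul ha0.le I
  have hsa : Real.sqrt (1 - I) ^ 2 = 1 - I := Real.sq_sqrt ha0.le
  have hsI : Real.sqrt I ^ 2 = I := Real.sq_sqrt hI0.le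
  have hsa0 : 0 < Real.sqrt (1 - I) := Real.sqrt_pos.mpr ha0
  have hsI0 : 0 < Real.sqrt I := Real.sqrt_pos.mpr hI0
  have hderiv : ∀ y ∈ Set.uIcc (-1:ℝ) 1,
      HasDerivAt (fun y : ℝ => Real.arctan (c * y) / s)
        (1 / ((1 - I) * y ^ 2 + I)) y := by
    intro y _
    have h0 : HasDerivAt (fun y : ℝ => c * y) c y := by
      simpa using (hasDerivAt_id y).const_mul c
    have h1 : HasDerivAt (fun y : ℝ => Real.arctan (c * y))
        ((1 / (1 + (c * y) ^ 2)) * c) y :=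
      (Real.hasDerivAt_arctan (c * y)).comp y h0
    have h2 := h1.div_const s
    refine h2.congr_deriv ?_
    symm
    have hden : 0 < (1 - I) * y ^ 2 + I := by positivity
    rw [hcdef, hsdef]
    have h1c : (0:ℝ) < 1 + (Real.sqrt (1-I)/Real.sqrt I * y)^2 := by positivity
    field_simp
    ring_nf
    linear_combination hsI + y^2 * hsa
  have hcont : IntervalIntegrable (fun y : ℝ => 1 / ((1 - I) * y ^ 2 + I))
      MeasureTheory.volume (-1) 1 := by
    apply Continuous.intervalIntegrable
    apply Continuous.div continuous_const (by continuity)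
    intro y; positivity
  rw [intervalIntegral.integral_eq_sub_of_hasDerivAt hderiv hcont,
    mul_one, mul_neg_one, Real.arctan_neg]
  ring

theorem QIF_star_period_below_one_and_onset :
    (∀ I : ℝ, 0 < I → I < 1 →
      ∫ y in (-1 : ℝ)..1, 1 / ((1 - I) * y ^ 2 + I)
        = 2 * Real.arctan (Real.sqrt ((1 - I) / I)) / Real.sqrt ((1 - I) * I)) ∧
    Tendsto
      (fun I : ℝ =>
        (1 / ∫ y in (-1 : ℝ)..1, 1 / ((1 - I) * y ^ 2 + I)) * π / Real.sqrt I)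
      (nhdsWithin 0 (Set.Ioi 0)) (nhds 1) := by
  refine ⟨fun I h0 h1 => integral_part h0 h1, ?_⟩
  have harc : Tendsto (fun I : ℝ => Real.arctan (Real.sqrt ((1 - I) / I)))
      (nhdsWithin 0 (Set.Ioi 0)) (nhds (π / 2)) := by
    have h1 : Tendsto (fun I : ℝ => (1 - I) / I) (nhdsWithin 0 (Set.Ioi 0)) atTop := by
      have hnum : Tendsto (fun I : ℝ => 1 - I) (nhdsWithin 0 (Set.Ioi 0)) (nhds 1) := by
        have hco : Continuous (fun I : ℝ => 1 - I) := by continuity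
        have := hco.tendsto (0:ℝ)
        simp only [sub_zero] at this
        exact this.mono_left nhdsWithin_le_nhds
      have hinv : Tendsto (fun I : ℝ => I⁻¹) (nhdsWithin 0 (Set.Ioi 0)) atTop :=
        tendsto_inv_nhdsGT_zero
      simpa [div_eq_mul_inv] using hnum.pos_mul_atTop one_pos hinv
    have hst : Tendsto Real.sqrt atTop atTop := by
      refine tendsto_atTop_atTop.2 fun b => ⟨b ^ 2, fun a ha => ?_⟩
      exact Real.le_sqrt_of_sq_le ha
    have h2 : Tendsto (fun I : ℝ => Real.sqrt ((1 - I) / I))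
        (nhdsWithin 0 (Set.Ioi 0)) atTop := hst.comp h1
    exact (Real.tendsto_arctan_atTop.mono_right nhdsWithin_le_nhds).comp h2
  have hsq : Tendsto (fun I : ℝ => Real.sqrt (1 - I)) (nhdsWithin 0 (Set.Ioi 0)) (nhds 1) := by
    have : Tendsto (fun I : ℝ => Real.sqrt (1 - I)) (nhds 0) (nhds 1) := by
      have hco : Continuous (fun I : ℝ => Real.sqrt (1 - I)) := by continuity
      have := hco.tendsto (0:ℝ)
      simpa using this
    exact this.mono_left nhdsWithin_le_nhds
  have hmain : Tendsto (fun I : ℝ => Real.sqrt (1 - I) * π /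
      (2 * Real.arctan (Real.sqrt ((1 - I) / I))))
      (nhdsWithin 0 (Set.Ioi 0)) (nhds 1) := by
    have hnum : Tendsto (fun I : ℝ => Real.sqrt (1 - I) * π)
        (nhdsWithin 0 (Set.Ioi 0)) (nhds (1 * π)) := hsq.mul tendsto_const_nhds
    have hden : Tendsto (fun I : ℝ => 2 * Real.arctan (Real.sqrt ((1 - I) / I)))
        (nhdsWithin 0 (Set.Ioi 0)) (nhds (2 * (π / 2))) := tendsto_const_nhds.mul harc
    have := hnum.div hden (by positivity : (2:ℝ) * (π/2) ≠ 0)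
    have hpi : (1 * π) / (2 * (π / 2)) = 1 := by
      field_simp
    rwa [hpi] at this
  refine hmain.congr' ?_
  filter_upwards [self_mem_nhdsWithin,
    Ioo_mem_nhdsGT (by norm_num : (0:ℝ) < 1)] with I hI hI1
  have h0 : 0 < I := hI
  have h1 : I < 1 := hI1.2
  rw [integral_part h0 h1]
  have ha0 : 0 < 1 - I := by linarith
  have harcpos : 0 < Real.arctan (Real.sqrt ((1 - I) / I)) := by
    have := Real.arctan_strictMono (Real.sqrt_pos.mpr (by positivity : (0:ℝ) < (1-I)/I))
    simpa using this
  have hsI0 : 0 < Real.sqrt I := Real.sqrt_pos.mpr h0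
  have harcpos' : 0 < Real.arctan (Real.sqrt (1 - I) / Real.sqrt I) := by
    rw [← Real.sqrt_div ha0.le]; exact harcpos
  rw [Real.sqrt_mul ha0.le, one_div_div]
  field_simp
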